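/- Let d, N ≥ 1 and suppose (A_1, …, A_N) is a tuple of complex Hermitian d×d matrices having the phase retrieval property on ℂ^d. Then there exists ε > 0 such that every tuple (B_1, …, B_N) of complex Hermitian d×d matrices with ‖B_j − A_j‖ < ε for all 1 ≤ j ≤ N (in any fixed matrix norm, e.g. the Frobenius norm) also has the phase retrieval property on ℂ^d. In other words, the set of phase retrievable Hermitian tuples is open in the space of N-tuples of Hermitian d×d matrices. -/

import Mathlib

open Matrix

/-- A tuple of complex Hermitian `d×d` matrices has the phase retrieval property on `ℂ^d`
if equality of all quadratic measurements implies equality up to a unimodular constant. -/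
def PhaseRetrievableC {d N : ℕ} (A : Fin N → Matrix (Fin d) (Fin d) ℂ) : Prop :=
  ∀ x y : Fin d → ℂ,
    (∀ j, star x ⬝ᵥ (A j) *ᵥ x = star y ⬝ᵥ (A j) *ᵥ y) →
      ∃ b : ℂ, ‖b‖ = 1 ∧ x = b • y

/-- The Frobenius norm of a complex matrix. -/
noncomputable def frobNorm {d : ℕ} (M : Matrix (Fin d) (Fin d) ℂ) : ℝ :=
  Real.sqrt (∑ k, ∑ l, ‖M k l‖ ^ 2)

noncomputable section
namespace PRaux

open Finset Complex

variable {d : ℕ}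

/-- The rank ≤ 2 difference matrix `x x* - y y*`. -/
def Qm (x y : Fin d → ℂ) : Matrix (Fin d) (Fin d) ℂ :=
  vecMulVec x (star x) - vecMulVec y (star y)

def nsq (x : Fin d → ℂ) : ℝ := ∑ i, Complex.normSq (x i)

def ip (x y : Fin d → ℂ) : ℂ := star x ⬝ᵥ y

lemma Qm_apply (x y : Fin d → ℂ) (k l : Fin d) :
    Qm x y k l = x k * (starRingEnd ℂ) (x l) - y k * (starRingEnd ℂ) (y l) := by
  simp [Qm, vecMulVec_apply, Matrix.sub_apply, Pi.star_apply, RCLike.star_def]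

lemma nsq_nonneg (x : Fin d → ℂ) : 0 ≤ nsq x :=
  Finset.sum_nonneg fun i _ => Complex.normSq_nonneg _

lemma trace_mul_Qm (M : Matrix (Fin d) (Fin d) ℂ) (x y : Fin d → ℂ) :
    trace (M * Qm x y) = star x ⬝ᵥ M *ᵥ x - star y ⬝ᵥ M *ᵥ y := by
  simp only [Qm, trace, diag_apply, Matrix.mul_apply, vecMulVec_apply, Pi.star_apply, Matrix.sub_apply,
    dotProduct, mulVec, RCLike.star_def, Finset.mul_sum]
  rw [← Finset.sum_sub_distrib]
  apply Finset.sum_congr rfl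
  intro k _
  rw [← Finset.sum_sub_distrib]
  apply Finset.sum_congr rfl
  intro l _
  ring

lemma frobNorm_nonneg (M : Matrix (Fin d) (Fin d) ℂ) : 0 ≤ frobNorm M :=
  Real.sqrt_nonneg _

lemma frobNorm_sq (M : Matrix (Fin d) (Fin d) ℂ) :
    frobNorm M ^ 2 = ∑ k, ∑ l, ‖M k l‖ ^ 2 :=
  Real.sq_sqrt (Finset.sum_nonneg fun _ _ => Finset.sum_nonneg fun _ _ => sq_nonneg _)

lemma frobNorm_pos (M : Matrix (Fin d) (Fin d) ℂ) (h : M ≠ 0) : 0 < frobNorm M := by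
  apply Real.sqrt_pos.2
  rcases lt_or_eq_of_le (Finset.sum_nonneg fun _ _ => Finset.sum_nonneg fun _ _ => sq_nonneg (‖M _ _‖)) with h1 | h1
  · exact h1
  · exfalso; apply h
    ext k l
    have h2 := (Finset.sum_eq_zero_iff_of_nonneg (fun _ _ => Finset.sum_nonneg fun _ _ => sq_nonneg (‖M _ _‖))).1 h1.symm k (Finset.mem_univ k)
    have h3 := (Finset.sum_eq_zero_iff_of_nonneg (fun _ _ => sq_nonneg (‖M k _‖))).1 h2 l (Finset.mem_univ l)
    simpa using sq_eq_zero_iff.1 h3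

lemma frobNorm_neg (M : Matrix (Fin d) (Fin d) ℂ) : frobNorm (-M) = frobNorm M := by
  simp [frobNorm]

lemma frobNorm_real_smul (t : ℝ) (M : Matrix (Fin d) (Fin d) ℂ) :
    frobNorm (t • M) = |t| * frobNorm M := by
  unfold frobNorm
  rw [← Real.sqrt_sq_eq_abs, ← Real.sqrt_mul (sq_nonneg t)]
  congr 1
  rw [Finset.mul_sum]
  apply Finset.sum_congr rfl; intro k _
  rw [Finset.mul_sum]
  apply Finset.sum_congr rfl; intro l _
  simp [Matrix.smul_apply, norm_smul, mul_pow]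

lemma frobSq_Qm (x y : Fin d → ℂ) :
    frobNorm (Qm x y) ^ 2 = nsq x ^ 2 + nsq y ^ 2 - 2 * Complex.normSq (ip x y) := by
  rw [frobNorm_sq]
  simp only [Qm_apply]
  have key : ∀ k l : Fin d, ‖x k * (starRingEnd ℂ) (x l) - y k * (starRingEnd ℂ) (y l)‖ ^ 2
      = normSq (x k) * normSq (x l) + normSq (y k) * normSq (y l)
        - 2 * ((x k * (starRingEnd ℂ) (y k)) * ((starRingEnd ℂ) (x l) * y l)).re := by
    intro k l
    rw [Complex.sq_norm, Complex.normSq_sub]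
    simp only [Complex.normSq_mul, Complex.normSq_conj]
    have h : (x k * (starRingEnd ℂ) (x l) * (starRingEnd ℂ) (y k * (starRingEnd ℂ) (y l)))
        = (x k * (starRingEnd ℂ) (y k)) * ((starRingEnd ℂ) (x l) * y l) := by
      rw [_root_.map_mul, Complex.conj_conj]; ring
    rw [h]
  rw [Finset.sum_congr rfl fun k _ => Finset.sum_congr rfl fun l _ => key k l]
  simp only [Finset.sum_sub_distrib, Finset.sum_add_distrib]
  have hxx : ∑ k, ∑ l : Fin d, normSq (x k) * normSq (x l) = nsq x ^ 2 := by
    rw [← Finset.sum_mul_sum]; rw [nsq, sq]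
  have hyy : ∑ k, ∑ l : Fin d, normSq (y k) * normSq (y l) = nsq y ^ 2 := by
    rw [← Finset.sum_mul_sum]; rw [nsq, sq]
  have hcross : ∑ k, ∑ l : Fin d, (2 * ((x k * (starRingEnd ℂ) (y k)) * ((starRingEnd ℂ) (x l) * y l)).re)
      = 2 * Complex.normSq (ip x y) := by
    simp only [← Finset.mul_sum]
    congr 1
    have h1 : ∑ k, ∑ l : Fin d, ((x k * (starRingEnd ℂ) (y k)) * ((starRingEnd ℂ) (x l) * y l)).re
        = ((∑ k, x k * (starRingEnd ℂ) (y k)) * (∑ l, (starRingEnd ℂ) (x l) * y l)).re := by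
      rw [Finset.sum_mul_sum, Complex.re_sum]
      exact Finset.sum_congr rfl fun k _ => (Complex.re_sum _ _).symm
    rw [h1]
    have h2 : (∑ k, x k * (starRingEnd ℂ) (y k)) = (starRingEnd ℂ) (ip x y) := by
      rw [ip, dotProduct, map_sum]
      exact Finset.sum_congr rfl fun k _ => by
        simp only [Pi.star_apply, RCLike.star_def, _root_.map_mul, Complex.conj_conj]
    have h3 : (∑ l, (starRingEnd ℂ) (x l) * y l) = ip x y := rfl
    rw [h2, h3, mul_comm, Complex.mul_conj]
    exact Complex.ofReal_re _
  rw [hxx, hyy, hcross]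

lemma normSq_ip_le (x y : Fin d → ℂ) : Complex.normSq (ip x y) ≤ nsq x * nsq y := by
  have h1 : ‖ip x y‖ ≤ ∑ i, ‖x i‖ * ‖y i‖ := by
    rw [ip, dotProduct]
    refine (norm_sum_le _ _).trans (le_of_eq (Finset.sum_congr rfl fun i _ => ?_))
    rw [norm_mul, Pi.star_apply, norm_star]
  have h2 : (∑ i, ‖x i‖ * ‖y i‖) ^ 2 ≤ (∑ i, ‖x i‖^2) * (∑ i, ‖y i‖^2) :=
    Finset.sum_mul_sq_le_sq_mul_sq _ _ _
  have h3 : normSq (ip x y) = ‖ip x y‖^2 := by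
    rw [Complex.sq_norm]
  have h4 : nsq x = ∑ i, ‖x i‖^2 := Finset.sum_congr rfl fun i _ => by
    rw [Complex.sq_norm]
  have h5 : nsq y = ∑ i, ‖y i‖^2 := Finset.sum_congr rfl fun i _ => by
    rw [Complex.sq_norm]
  have h7 : ‖ip x y‖^2 ≤ (∑ i, ‖x i‖ * ‖y i‖)^2 := pow_le_pow_left₀ (norm_nonneg (ip x y)) h1 2
  rw [h3, h4, h5]
  linarith

lemma exists_orth_rep (x y : Fin d → ℂ) (hQ : Qm x y ≠ 0) :
    ∃ x' y' : Fin d → ℂ, Qm x' y' = Qm x y ∧ ip x' y' = 0 := by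
  by_cases hz : ip x y = 0
  · exact ⟨x, y, rfl, hz⟩
  · set z := ip x y with hzdef
    set r : ℝ := ‖z‖ with hrdef
    have hr : 0 < r := norm_pos_iff.2 hz
    set S : ℝ := nsq x + nsq y with hSdef
    have hF : 0 < frobNorm (Qm x y) := frobNorm_pos _ hQ
    have hF2 : 0 < frobNorm (Qm x y) ^ 2 := by positivity
    have hid : frobNorm (Qm x y) ^ 2 = nsq x ^ 2 + nsq y ^ 2 - 2 * r ^ 2 := by
      rw [frobSq_Qm, hrdef, Complex.sq_norm, ← hzdef]
    have hCS : Complex.normSq z ≤ nsq x * nsq y := normSq_ip_le x y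
    have hr2 : Complex.normSq z = r ^ 2 := by
      rw [hrdef, Complex.sq_norm]
    have hS2 : S ^ 2 = nsq x ^ 2 + nsq y ^ 2 + 2 * (nsq x * nsq y) := by rw [hSdef]; ring
    have hpos : 0 < S ^ 2 - 4 * r ^ 2 := by linarith [hid, hCS, hr2, hF2, hS2]
    have hSpos : 0 < S := by nlinarith [nsq_nonneg x, nsq_nonneg y]
    have h2r : 2 * r < S := by nlinarith
    obtain ⟨c, s, hcs, hslin⟩ :
        ∃ c s : ℝ, c ^ 2 - s ^ 2 = 1 ∧ c * s * S + (c ^ 2 + s ^ 2) * r = 0 := by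
      set D : ℝ := Real.sqrt (S ^ 2 - 4 * r ^ 2) with hDdef
      have hD2 : D ^ 2 = S ^ 2 - 4 * r ^ 2 := Real.sq_sqrt hpos.le
      have hDpos : 0 < D := Real.sqrt_pos.2 hpos
      set u : ℝ := (-S + D) / (2 * r) with hudef
      have h2ru : 2 * r * u = -S + D := by rw [hudef]; field_simp
      have hDltS : D < S := by nlinarith [hDpos]
      have hu_neg : u < 0 := by
        rw [hudef]; apply div_neg_of_neg_of_pos <;> [linarith; positivity]
      have hu_gt : -1 < u := by
        have hD_gt : S - 2 * r < D := by nlinarith [hDpos]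
        rw [hudef, lt_div_iff₀ (by positivity : (0:ℝ) < 2 * r)]
        linarith
      have h1u : (0:ℝ) < 1 - u ^ 2 := by nlinarith
      have hquad : r * u ^ 2 + S * u + r = 0 := by
        have hD' : D = 2 * r * u + S := by linarith
        have hsq : (2 * r * u + S) ^ 2 = S ^ 2 - 4 * r ^ 2 := by rw [← hD']; exact hD2
        apply mul_left_cancel₀ (show (4 * r : ℝ) ≠ 0 by positivity)
        rw [mul_zero]
        linear_combination hsq
      set c : ℝ := 1 / Real.sqrt (1 - u ^ 2) with hcdef
      have hc2 : c ^ 2 = (1 - u ^ 2)⁻¹ := by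
        rw [hcdef, div_pow, one_pow, Real.sq_sqrt h1u.le, one_div]
      refine ⟨c, u * c, ?_, ?_⟩
      · rw [mul_pow, hc2]; field_simp
      · linear_combination (c ^ 2) * hquad
    obtain ⟨φ, hφ, hφz⟩ : ∃ φ : ℂ, φ * (starRingEnd ℂ) φ = 1 ∧ φ * z = ((r : ℝ) : ℂ) := by
      have hrC : ((r : ℝ) : ℂ) ≠ 0 := by exact_mod_cast hr.ne'
      refine ⟨(starRingEnd ℂ) z / (r : ℂ), ?_, ?_⟩
      · rw [map_div₀, Complex.conj_conj, Complex.conj_ofReal, div_mul_div_comm,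
          mul_comm ((starRingEnd ℂ) z) z, Complex.mul_conj, hr2]
        push_cast
        field_simp
      · rw [div_mul_eq_mul_div, mul_comm, Complex.mul_conj, hr2]
        push_cast
        rw [sq]
        field_simp
    have hcsC : (c : ℂ) ^ 2 - (s : ℂ) ^ 2 = 1 := by exact_mod_cast hcs
    refine ⟨fun i => (c : ℂ) * x i + (s : ℂ) * (φ * y i),
            fun i => (s : ℂ) * x i + (c : ℂ) * (φ * y i), ?_, ?_⟩
    · ext k l
      simp only [Qm_apply, map_add, _root_.map_mul, Complex.conj_ofReal]
      linear_combination (x k * (starRingEnd ℂ) (x l)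
          - φ * (starRingEnd ℂ) φ * (y k * (starRingEnd ℂ) (y l))) * hcsC
        - (y k * (starRingEnd ℂ) (y l)) * hφ
    · have hsum : ip (fun i => (c : ℂ) * x i + (s : ℂ) * (φ * y i))
          (fun i => (s : ℂ) * x i + (c : ℂ) * (φ * y i))
          = ∑ i, (((c : ℂ) * (s : ℂ)) * ((starRingEnd ℂ) (x i) * x i
          + (starRingEnd ℂ) (y i) * y i)
          + (c : ℂ) ^ 2 * φ * ((starRingEnd ℂ) (x i) * y i)
          + (s : ℂ) ^ 2 * (starRingEnd ℂ) φ * ((starRingEnd ℂ) (y i) * x i)) := by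
        rw [ip, dotProduct]
        apply Finset.sum_congr rfl; intro i _
        simp only [Pi.star_apply, RCLike.star_def, map_add, _root_.map_mul,
          Complex.conj_ofReal]
        linear_combination ((starRingEnd ℂ) (y i) * y i * ((c : ℂ) * (s : ℂ))) * hφ
      have hnsqs : ∀ v : Fin d → ℂ, ∑ i, (starRingEnd ℂ) (v i) * v i = ((nsq v : ℝ) : ℂ) := by
        intro v
        rw [nsq]
        push_cast
        exact Finset.sum_congr rfl fun i _ => by rw [mul_comm, Complex.mul_conj]
      have hzx : ∑ i, (starRingEnd ℂ) (x i) * y i = z := rfl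
      have hzy : ∑ i, (starRingEnd ℂ) (y i) * x i = (starRingEnd ℂ) z := by
        rw [hzdef, ip, dotProduct, map_sum]
        refine Finset.sum_congr rfl fun i _ => ?_
        simp only [Pi.star_apply, RCLike.star_def, _root_.map_mul, Complex.conj_conj]
        ring
      rw [hsum]
      simp only [Finset.sum_add_distrib, ← Finset.mul_sum]
      rw [hnsqs x, hnsqs y, hzx, hzy]
      have hconj : (starRingEnd ℂ) φ * (starRingEnd ℂ) z = ((r : ℝ) : ℂ) := by
        rw [← _root_.map_mul, hφz, Complex.conj_ofReal]
      have hSC : ((S : ℝ) : ℂ) = ((nsq x : ℝ) : ℂ) + ((nsq y : ℝ) : ℂ) := by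
        rw [hSdef]; push_cast; ring
      have hslinC : (c : ℂ) * (s : ℂ) * ((S : ℝ) : ℂ)
          + ((c : ℂ) ^ 2 + (s : ℂ) ^ 2) * ((r : ℝ) : ℂ) = 0 := by
        exact_mod_cast congrArg (fun t : ℝ => (t : ℂ)) hslin
      linear_combination hslinC + ((c : ℂ) ^ 2) * hφz + ((s : ℂ) ^ 2) * hconj
        - ((c : ℂ) * (s : ℂ)) * hSC


lemma Qm_smul_unit (b : ℂ) (hb : ‖b‖ = 1) (y : Fin d → ℂ) : Qm (b • y) y = 0 := by
  have hb2 : (starRingEnd ℂ) b * b = 1 := by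
    rw [mul_comm, Complex.mul_conj]
    have : Complex.normSq b = 1 := by
      rw [Complex.normSq_eq_norm_sq, hb]; norm_num
    rw [this]; norm_num
  ext k l
  simp only [Qm_apply, Pi.smul_apply, smul_eq_mul, Matrix.zero_apply, _root_.map_mul]
  linear_combination (y k * (starRingEnd ℂ) (y l)) * hb2

lemma Qm_zero_exists (x y : Fin d → ℂ) (h : Qm x y = 0) :
    ∃ b : ℂ, ‖b‖ = 1 ∧ x = b • y := by
  have he : ∀ k l, x k * (starRingEnd ℂ) (x l) = y k * (starRingEnd ℂ) (y l) := by
    intro k l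
    have := congrFun (congrFun h k) l
    rw [Qm_apply] at this
    simpa [sub_eq_zero] using this
  by_cases hy : y = 0
  · refine ⟨1, by norm_num, ?_⟩
    have hx : ∀ k, x k = 0 := by
      intro k
      have := he k k
      rw [hy] at this
      simp only [Pi.zero_apply, mul_zero, zero_mul, map_zero] at this
      have h0 : Complex.normSq (x k) = 0 := by
        have h1 : ((Complex.normSq (x k) : ℝ) : ℂ) = 0 := by
          rw [← Complex.mul_conj]; exact this
        exact_mod_cast h1
      exact Complex.normSq_eq_zero.1 h0
    funext k
    simp [hx k, hy]
  · obtain ⟨l, hyl⟩ := Function.ne_iff.1 hy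
    simp only [Pi.zero_apply] at hyl
    have hll := he l l
    have hnorm : Complex.normSq (x l) = Complex.normSq (y l) := by
      have h1 : ((Complex.normSq (x l) : ℝ) : ℂ) = ((Complex.normSq (y l) : ℝ) : ℂ) := by
        rw [← Complex.mul_conj, ← Complex.mul_conj]; exact hll
      exact_mod_cast h1
    have hxl : x l ≠ 0 := by
      intro h0
      apply hyl
      apply Complex.normSq_eq_zero.1
      rw [← hnorm, h0, map_zero]
    refine ⟨x l / y l, ?_, ?_⟩
    · rw [norm_div]
      have : ‖x l‖ = ‖y l‖ := by
        rw [Complex.norm_def, Complex.norm_def, hnorm]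
      rw [this]
      exact div_self (norm_ne_zero_iff.2 hyl)
    · funext k
      have hkl := he k l
      have h9 : (starRingEnd ℂ) (x l) * (x k * y l) = (starRingEnd ℂ) (x l) * (x l * y k) := by
        linear_combination y l * hkl - y k * hll
      have h10 : x k * y l = x l * y k :=
        mul_left_cancel₀ (by simpa using hxl : (starRingEnd ℂ) (x l) ≠ 0) h9
      show x k = (x l / y l) * y k
      field_simp
      linear_combination h10

lemma Qm_real_smul (t : ℝ) (x y : Fin d → ℂ) :
    Qm (((t : ℂ)) • x) (((t : ℂ)) • y) = (t ^ 2 : ℝ) • Qm x y := by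
  ext k l
  simp only [Qm_apply, Pi.smul_apply, smul_eq_mul, Matrix.smul_apply, _root_.map_mul,
    Complex.conj_ofReal, Complex.real_smul]
  push_cast
  ring

lemma nsq_real_smul (t : ℝ) (x : Fin d → ℂ) : nsq (((t : ℂ)) • x) = t ^ 2 * nsq x := by
  rw [nsq, nsq, Finset.mul_sum]
  refine Finset.sum_congr rfl fun i _ => ?_
  simp only [Pi.smul_apply, smul_eq_mul, Complex.normSq_mul]
  rw [Complex.normSq_ofReal]
  ring

lemma trace_CS (M Q : Matrix (Fin d) (Fin d) ℂ) :
    ‖trace (M * Q)‖ ≤ frobNorm M * frobNorm Q := by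
  have h1 : ‖trace (M * Q)‖ ≤ ∑ k, ∑ l, ‖M k l‖ * ‖Q l k‖ := by
    rw [trace]
    refine (norm_sum_le _ _).trans ?_
    refine Finset.sum_le_sum fun k _ => ?_
    rw [diag_apply, Matrix.mul_apply]
    refine (norm_sum_le _ _).trans ?_
    exact Finset.sum_le_sum fun l _ => le_of_eq (norm_mul _ _)
  have h4 : (∑ k, ∑ l, ‖M k l‖ * ‖Q l k‖) = ∑ p : Fin d × Fin d, ‖M p.1 p.2‖ * ‖Q p.2 p.1‖ := by
    rw [Fintype.sum_prod_type]
  have h3 : (∑ p : Fin d × Fin d, ‖M p.1 p.2‖ * ‖Q p.2 p.1‖) ^ 2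
      ≤ (∑ p : Fin d × Fin d, ‖M p.1 p.2‖ ^ 2) * (∑ p : Fin d × Fin d, ‖Q p.2 p.1‖ ^ 2) :=
    Finset.sum_mul_sq_le_sq_mul_sq _ _ _
  have hM : (∑ p : Fin d × Fin d, ‖M p.1 p.2‖ ^ 2) = frobNorm M ^ 2 := by
    rw [frobNorm_sq, Fintype.sum_prod_type]
  have hQ : (∑ p : Fin d × Fin d, ‖Q p.2 p.1‖ ^ 2) = frobNorm Q ^ 2 := by
    rw [frobNorm_sq, Fintype.sum_prod_type]
    exact Finset.sum_comm
  rw [hM, hQ, ← mul_pow] at h3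
  have ha : (0:ℝ) ≤ ∑ p : Fin d × Fin d, ‖M p.1 p.2‖ * ‖Q p.2 p.1‖ :=
    Finset.sum_nonneg fun p _ => mul_nonneg (norm_nonneg _) (norm_nonneg _)
  have hb : (0:ℝ) ≤ frobNorm M * frobNorm Q :=
    mul_nonneg (frobNorm_nonneg _) (frobNorm_nonneg _)
  rw [h4] at h1
  nlinarith [h1, h3, ha, hb]


lemma exists_unit_rep (x y : Fin d → ℂ) (hQ : Qm x y ≠ 0) :
    ∃ x' y' : Fin d → ℂ, Qm x' y' = (frobNorm (Qm x y))⁻¹ • Qm x y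
      ∧ nsq x' + nsq y' ≤ 2 ∧ frobNorm (Qm x' y') = 1 := by
  obtain ⟨x₀, y₀, hQ0, hip0⟩ := exists_orth_rep x y hQ
  set F := frobNorm (Qm x y) with hF
  have hFpos : 0 < F := frobNorm_pos _ hQ
  set t : ℝ := Real.sqrt F⁻¹ with ht
  have ht2 : t ^ 2 = F⁻¹ := Real.sq_sqrt (by positivity)
  have hb : (nsq x₀ + nsq y₀) ^ 2 ≤ 2 * F ^ 2 := by
    have hid := frobSq_Qm x₀ y₀
    rw [hQ0, ← hF, hip0] at hid
    simp only [map_zero, mul_zero, sub_zero] at hid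
    nlinarith [nsq_nonneg x₀, nsq_nonneg y₀, sq_nonneg (nsq x₀ - nsq y₀)]
  have hS2F : nsq x₀ + nsq y₀ ≤ 2 * F := by
    nlinarith [nsq_nonneg x₀, nsq_nonneg y₀, hFpos]
  refine ⟨(t : ℂ) • x₀, (t : ℂ) • y₀, ?_, ?_, ?_⟩
  · rw [Qm_real_smul, hQ0, ht2]
  · rw [nsq_real_smul, nsq_real_smul, ht2]
    have h1 : F⁻¹ * (nsq x₀ + nsq y₀) ≤ F⁻¹ * (2 * F) :=
      mul_le_mul_of_nonneg_left hS2F (by positivity)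
    have h2 : F⁻¹ * (2 * F) = 2 := by field_simp
    rw [mul_add] at h1
    linarith
  · rw [Qm_real_smul, hQ0, ht2, frobNorm_real_smul, ← hF,
      abs_of_pos (by positivity : (0:ℝ) < F⁻¹)]
    field_simp

end PRaux
end

theorem stmt_6 (d N : ℕ) (hd : 1 ≤ d) (hN : 1 ≤ N)
    (A : Fin N → Matrix (Fin d) (Fin d) ℂ)
    (hA : ∀ j, (A j).IsHermitian) (hPR : PhaseRetrievableC A) :
    ∃ ε > (0 : ℝ), ∀ B : Fin N → Matrix (Fin d) (Fin d) ℂ,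
      (∀ j, (B j).IsHermitian) → (∀ j, frobNorm (B j - A j) < ε) →
      PhaseRetrievableC B := by
  classical
  set S : Set ((Fin d → ℂ) × (Fin d → ℂ)) :=
    {p | PRaux.nsq p.1 + PRaux.nsq p.2 ≤ 2 ∧ frobNorm (PRaux.Qm p.1 p.2) = 1} with hSdef
  set g : ((Fin d → ℂ) × (Fin d → ℂ)) → ℝ :=
    fun p => ∑ j, ‖trace (A j * PRaux.Qm p.1 p.2)‖ with hg
  have hgnn : ∀ p, 0 ≤ g p := fun p => Finset.sum_nonneg fun j _ => norm_nonneg _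
  have hgpos : ∀ p ∈ S, 0 < g p := by
    rintro ⟨x, y⟩ ⟨hb, hf⟩
    rcases (hgnn (x, y)).lt_or_eq with h | h
    · exact h
    · exfalso
      have hz : ∀ j, trace (A j * PRaux.Qm x y) = 0 := by
        intro j
        have h1 := (Finset.sum_eq_zero_iff_of_nonneg
          (fun j _ => norm_nonneg (trace (A j * PRaux.Qm x y)))).1 h.symm j (Finset.mem_univ j)
        exact norm_eq_zero.1 h1
      have hmeas : ∀ j, star x ⬝ᵥ (A j) *ᵥ x = star y ⬝ᵥ (A j) *ᵥ y := by
        intro j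
        have h1 := hz j
        rw [PRaux.trace_mul_Qm] at h1
        exact sub_eq_zero.1 h1
      obtain ⟨b, hb1, rfl⟩ := hPR x y hmeas
      have h0 := PRaux.Qm_smul_unit b hb1 y
      rw [h0] at hf
      simp [frobNorm] at hf
  -- continuity facts
  have hent : ∀ k l : Fin d, Continuous fun p : (Fin d → ℂ) × (Fin d → ℂ) =>
      PRaux.Qm p.1 p.2 k l := by
    intro k l
    simp only [PRaux.Qm_apply]
    exact (((continuous_apply k).comp continuous_fst).mul
        (Complex.continuous_conj.comp ((continuous_apply l).comp continuous_fst))).sub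
      (((continuous_apply k).comp continuous_snd).mul
        (Complex.continuous_conj.comp ((continuous_apply l).comp continuous_snd)))
  have hfrobcont : Continuous fun p : (Fin d → ℂ) × (Fin d → ℂ) =>
      frobNorm (PRaux.Qm p.1 p.2) := by
    have : (fun p : (Fin d → ℂ) × (Fin d → ℂ) => frobNorm (PRaux.Qm p.1 p.2))
        = fun p => Real.sqrt (∑ k, ∑ l, ‖PRaux.Qm p.1 p.2 k l‖ ^ 2) := rfl
    rw [this]
    exact Real.continuous_sqrt.comp (continuous_finset_sum _ fun k _ =>
      continuous_finset_sum _ fun l _ => ((hent k l).norm.pow 2))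
  have hnsqcont : Continuous fun v : Fin d → ℂ => PRaux.nsq v := by
    unfold PRaux.nsq
    exact continuous_finset_sum _ fun i _ =>
      Complex.continuous_normSq.comp (continuous_apply i)
  have htrcont : ∀ j, Continuous fun p : (Fin d → ℂ) × (Fin d → ℂ) =>
      trace (A j * PRaux.Qm p.1 p.2) := by
    intro j
    have : (fun p : (Fin d → ℂ) × (Fin d → ℂ) => trace (A j * PRaux.Qm p.1 p.2))
        = fun p => ∑ k, ∑ l, A j k l * PRaux.Qm p.1 p.2 l k := by
      funext p
      rw [Matrix.trace]
      simp only [Matrix.diag_apply, Matrix.mul_apply]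
    rw [this]
    exact continuous_finset_sum _ fun k _ => continuous_finset_sum _ fun l _ =>
      continuous_const.mul (hent l k)
  have hgcont : Continuous g := by
    rw [hg]
    exact continuous_finset_sum _ fun j _ => (htrcont j).norm
  have hSclosed : IsClosed S := by
    rw [hSdef]
    exact IsClosed.inter
      (isClosed_le ((hnsqcont.comp continuous_fst).add (hnsqcont.comp continuous_snd))
        continuous_const)
      (isClosed_eq hfrobcont continuous_const)
  have hSbdd : Bornology.IsBounded S := by
    apply Bornology.IsBounded.subset (Metric.isBounded_closedBall
      (x := (0 : (Fin d → ℂ) × (Fin d → ℂ))) (r := 2))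
    rintro ⟨x, y⟩ ⟨hb, -⟩
    rw [Metric.mem_closedBall, dist_zero_right, Prod.norm_def]
    have key : ∀ v : Fin d → ℂ, PRaux.nsq v ≤ 2 → ‖v‖ ≤ 2 := by
      intro v hv
      rw [pi_norm_le_iff_of_nonneg (by norm_num : (0:ℝ) ≤ 2)]
      intro i
      have h1 : Complex.normSq (v i) ≤ PRaux.nsq v := by
        rw [PRaux.nsq]
        exact Finset.single_le_sum (fun i _ => Complex.normSq_nonneg (v i)) (Finset.mem_univ i)
      have h2 : ‖v i‖ ^ 2 ≤ 2 := by
        rw [Complex.sq_norm]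
        linarith
      nlinarith [norm_nonneg (v i)]
    exact max_le (key x (by linarith [PRaux.nsq_nonneg y]))
      (key y (by linarith [PRaux.nsq_nonneg x]))
  have hScompact : IsCompact S := Metric.isCompact_of_isClosed_isBounded hSclosed hSbdd
  obtain ⟨c, hcpos, hcle⟩ : ∃ c > (0:ℝ), ∀ p ∈ S, c ≤ g p := by
    rcases S.eq_empty_or_nonempty with hS | hS
    · exact ⟨1, one_pos, by simp [hS]⟩
    · obtain ⟨p₀, hp₀, hmin⟩ := hScompact.exists_isMinOn hS hgcont.continuousOn
      exact ⟨g p₀, hgpos p₀ hp₀, fun p hp => hmin hp⟩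
  refine ⟨c / (N + 1), by positivity, ?_⟩
  intro B hBh hBclose x y hmeas
  by_contra hno
  push_neg at hno
  have hQne : PRaux.Qm x y ≠ 0 := by
    intro h
    obtain ⟨b, hb1, hb2⟩ := PRaux.Qm_zero_exists x y h
    exact hno b hb1 hb2
  obtain ⟨x', y', hQ', hb2, hf1⟩ := PRaux.exists_unit_rep x y hQne
  have hmem : (x', y') ∈ S := ⟨hb2, hf1⟩
  have hBz : ∀ j, trace (B j * PRaux.Qm x' y') = 0 := by
    intro j
    have hz : trace (B j * PRaux.Qm x y) = 0 := by
      rw [PRaux.trace_mul_Qm, hmeas j, sub_self]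
    rw [hQ', Matrix.mul_smul, Matrix.trace_smul, hz, smul_zero]
  have hkey : ∀ j, ‖trace (A j * PRaux.Qm x' y')‖ < c / (N + 1) := by
    intro j
    have heq : trace (A j * PRaux.Qm x' y') = trace ((A j - B j) * PRaux.Qm x' y') := by
      rw [Matrix.sub_mul, Matrix.trace_sub, hBz j, sub_zero]
    rw [heq]
    calc ‖trace ((A j - B j) * PRaux.Qm x' y')‖
        ≤ frobNorm (A j - B j) * frobNorm (PRaux.Qm x' y') := PRaux.trace_CS _ _
      _ = frobNorm (A j - B j) := by rw [hf1, mul_one]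
      _ = frobNorm (B j - A j) := by rw [← PRaux.frobNorm_neg, neg_sub]
      _ < c / (N + 1) := hBclose j
  have hNne : (Finset.univ : Finset (Fin N)).Nonempty := by
    haveI : Nonempty (Fin N) := ⟨⟨0, hN⟩⟩
    exact Finset.univ_nonempty
  have hsum : g (x', y') < c := by
    rw [hg]
    calc ∑ j, ‖trace (A j * PRaux.Qm x' y')‖
        < ∑ _j : Fin N, c / (N + 1) :=
          Finset.sum_lt_sum_of_nonempty hNne (fun j _ => hkey j)
      _ = N * (c / (N + 1)) := by
          rw [Finset.sum_const, Finset.card_univ, Fintype.card_fin, nsmul_eq_mul]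
      _ = c * ((N : ℝ) / (N + 1)) := by ring
      _ < c * 1 := by
          apply mul_lt_mul_of_pos_left _ hcpos
          rw [div_lt_one (by positivity)]
          linarith
      _ = c := mul_one c
  exact absurd (hcle _ hmem) (not_le.2 hsum)
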